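/- arXiv:1503.05479 — 2 statements merged into one kernel-verified Lean document; each statement's English description precedes it below -/
import Mathlib

section
/- The dual norm of the subspace norm ‖·‖ₛ associated with matrices S⁽¹⁾,…,S⁽ᴷ⁾ is given by ‖Y‖ₛ* = max over k = 1,…,K of the spectral norm ‖Y₍ₖ₎S⁽ᵏ⁾‖, for any tensor Y; i.e., sup over {M⁽ᵏ⁾} with Σₖ‖M⁽ᵏ⁾‖* ≤ 1 of ⟨Y, Σₖ foldₖ(M⁽ᵏ⁾(S⁽ᵏ⁾)ᵀ)⟩ equals maxₖ ‖Y₍ₖ₎S⁽ᵏ⁾‖. -/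
open Matrix

noncomputable def specNorm {m n : Type*} [Fintype m] [Fintype n] [DecidableEq n]
    (A : Matrix m n ℝ) : ℝ :=
  ‖LinearMap.toContinuousLinearMap (Matrix.toEuclideanLin A)‖

noncomputable def nuclearNorm {m n : Type*} [Fintype m] [Fintype n] (A : Matrix m n ℝ) : ℝ :=
  sInf { s | ∃ (R : ℕ) (a : Fin R → m → ℝ) (b : Fin R → n → ℝ),
    A = ∑ r, Matrix.of (fun i j => a r i * b r j) ∧
    s = ∑ r, Real.sqrt (∑ i, a r i ^ 2) * Real.sqrt (∑ j, b r j ^ 2) }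

/-- Mode-k unfolding of a K-th order tensor of size n×⋯×n. -/
def unfold {K n : ℕ} (k : Fin K) (X : (Fin K → Fin n) → ℝ) :
    Matrix (Fin n) ({l : Fin K // l ≠ k} → Fin n) ℝ :=
  fun i f => X (fun l => if h : l = k then i else f ⟨l, h⟩)

/-- Mode-k folding, the inverse of the mode-k unfolding. -/
def fold {K n : ℕ} (k : Fin K) (M : Matrix (Fin n) ({l : Fin K // l ≠ k} → Fin n) ℝ) :
    (Fin K → Fin n) → ℝ :=
  fun idx => M (idx k) (fun l => idx l.1)

section Aux

variable {m n : Type*} [Fintype m] [Fintype n] [DecidableEq n]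

lemma euclid_norm_eq (a : m → ℝ) :
    ‖((WithLp.equiv 2 (m → ℝ)).symm a : EuclideanSpace ℝ m)‖ = Real.sqrt (∑ i, a i ^ 2) := by
  rw [EuclideanSpace.norm_eq]
  congr 1
  apply Finset.sum_congr rfl
  intro i _
  simp [Real.norm_eq_abs, sq_abs]

open scoped RealInnerProductSpace in
lemma ip_le_spec_mul (A : Matrix m n ℝ) (a : m → ℝ) (b : n → ℝ) :
    ∑ i, ∑ j, A i j * (a i * b j) ≤
      specNorm A * (Real.sqrt (∑ i, a i ^ 2) * Real.sqrt (∑ j, b j ^ 2)) := by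
  set T := LinearMap.toContinuousLinearMap (Matrix.toEuclideanLin A) with hT
  set a' : EuclideanSpace ℝ m := (WithLp.equiv 2 _).symm a with ha'
  set b' : EuclideanSpace ℝ n := (WithLp.equiv 2 _).symm b with hb'
  have hTb : T b' = (WithLp.equiv 2 (m → ℝ)).symm (A *ᵥ b) := by
    simp [hT, hb', Matrix.toEuclideanLin_apply]
  have h1 : ∑ i, ∑ j, A i j * (a i * b j) = ⟪a', T b'⟫ := by
    rw [hTb]
    simp only [PiLp.inner_apply, RCLike.inner_apply, conj_trivial]
    apply Finset.sum_congr rfl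
    intro i _
    simp only [ha', WithLp.equiv_symm_apply, WithLp.ofLp_toLp, Matrix.mulVec, dotProduct]
    rw [Finset.sum_mul]
    exact Finset.sum_congr rfl fun j _ => by ring
  rw [h1, ← euclid_norm_eq a, ← euclid_norm_eq b]
  calc ⟪a', T b'⟫ ≤ ‖a'‖ * ‖T b'‖ := real_inner_le_norm _ _
    _ ≤ ‖a'‖ * (‖T‖ * ‖b'‖) := by
        apply mul_le_mul_of_nonneg_left (T.le_opNorm b') (norm_nonneg _)
    _ = specNorm A * (‖a'‖ * ‖b'‖) := by rw [specNorm]; ring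

lemma nucSet_nonneg (A : Matrix m n ℝ) {s : ℝ}
    (hs : s ∈ { s | ∃ (R : ℕ) (a : Fin R → m → ℝ) (b : Fin R → n → ℝ),
      A = ∑ r, Matrix.of (fun i j => a r i * b r j) ∧
      s = ∑ r, Real.sqrt (∑ i, a r i ^ 2) * Real.sqrt (∑ j, b r j ^ 2) }) : 0 ≤ s := by
  obtain ⟨R, a, b, -, rfl⟩ := hs
  exact Finset.sum_nonneg fun r _ => mul_nonneg (Real.sqrt_nonneg _) (Real.sqrt_nonneg _)

lemma nucSet_nonempty (A : Matrix m n ℝ) [DecidableEq m] :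
    { s | ∃ (R : ℕ) (a : Fin R → m → ℝ) (b : Fin R → n → ℝ),
      A = ∑ r, Matrix.of (fun i j => a r i * b r j) ∧
      s = ∑ r, Real.sqrt (∑ i, a r i ^ 2) * Real.sqrt (∑ j, b r j ^ 2) }.Nonempty := by
  classical
  obtain ⟨e⟩ := Fintype.truncEquivFin (m × n)
  refine ⟨_, Fintype.card (m × n),
    fun r i => if i = (e.symm r).1 then A (e.symm r).1 (e.symm r).2 else 0,
    fun r j => if j = (e.symm r).2 then 1 else 0, ?_, rfl⟩
  ext i j
  simp only [Matrix.sum_apply, Matrix.of_apply]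
  rw [show (∑ x : Fin (Fintype.card (m × n)),
      (if i = (e.symm x).1 then A (e.symm x).1 (e.symm x).2 else 0) *
        if j = (e.symm x).2 then 1 else 0)
    = ∑ p : m × n, (if i = p.1 then A p.1 p.2 else 0) * if j = p.2 then 1 else 0 from
      Equiv.sum_comp e.symm
        (fun p : m × n => (if i = p.1 then A p.1 p.2 else 0) * if j = p.2 then 1 else 0)]
  rw [Fintype.sum_prod_type]
  simp

lemma nuclearNorm_nonneg (A : Matrix m n ℝ) : 0 ≤ nuclearNorm A := by
  classical
  exact le_csInf (nucSet_nonempty A) fun s hs => nucSet_nonneg A hs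

lemma nuclearNorm_zero : nuclearNorm (0 : Matrix m n ℝ) = 0 := by
  classical
  refine le_antisymm (csInf_le ⟨0, fun s hs => nucSet_nonneg 0 hs⟩ ?_) (nuclearNorm_nonneg 0)
  exact ⟨0, fun r => Fin.elim0 r, fun r => Fin.elim0 r, by simp, by simp⟩

lemma nuclearNorm_rank_one_le (a : m → ℝ) (b : n → ℝ) :
    nuclearNorm (Matrix.of fun i j => a i * b j) ≤
      Real.sqrt (∑ i, a i ^ 2) * Real.sqrt (∑ j, b j ^ 2) := by
  classical
  refine csInf_le ⟨0, fun s hs => nucSet_nonneg _ hs⟩ ?_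
  exact ⟨1, fun _ => a, fun _ => b, by simp, by simp⟩

lemma ip_le_spec_mul_nuc (A : Matrix m n ℝ) [DecidableEq m] (M : Matrix m n ℝ) :
    ∑ i, ∑ j, A i j * M i j ≤ specNorm A * nuclearNorm M := by
  classical
  have hspec : 0 ≤ specNorm A := norm_nonneg _
  have key : ∀ s ∈ { s | ∃ (R : ℕ) (a : Fin R → m → ℝ) (b : Fin R → n → ℝ),
      M = ∑ r, Matrix.of (fun i j => a r i * b r j) ∧
      s = ∑ r, Real.sqrt (∑ i, a r i ^ 2) * Real.sqrt (∑ j, b r j ^ 2) },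
      ∑ i, ∑ j, A i j * M i j ≤ specNorm A * s := by
    rintro s ⟨R, a, b, rfl, rfl⟩
    have step : ∑ i, ∑ j, A i j * (∑ r, Matrix.of (fun i j => a r i * b r j)) i j
        = ∑ r, ∑ i, ∑ j, A i j * (a r i * b r j) := by
      simp only [Matrix.sum_apply, Matrix.of_apply, Finset.mul_sum]
      have h1 : ∀ i, ∑ j, ∑ r, A i j * (a r i * b r j)
          = ∑ r, ∑ j, A i j * (a r i * b r j) := fun i => Finset.sum_comm
      simp only [h1]
      exact Finset.sum_comm
    rw [step, Finset.mul_sum]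
    exact Finset.sum_le_sum fun r _ => ip_le_spec_mul A (a r) (b r)
  rcases eq_or_lt_of_le hspec with h0 | hpos
  · have : ∀ s ∈ { s | ∃ (R : ℕ) (a : Fin R → m → ℝ) (b : Fin R → n → ℝ),
      M = ∑ r, Matrix.of (fun i j => a r i * b r j) ∧
      s = ∑ r, Real.sqrt (∑ i, a r i ^ 2) * Real.sqrt (∑ j, b r j ^ 2) },
        ∑ i, ∑ j, A i j * M i j ≤ 0 := by
      intro s hs
      have := key s hs
      rw [← h0] at this
      simpa using this
    obtain ⟨s, hs⟩ := nucSet_nonempty M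
    calc ∑ i, ∑ j, A i j * M i j ≤ 0 := this s hs
      _ ≤ specNorm A * nuclearNorm M := mul_nonneg hspec (nuclearNorm_nonneg M)
  · rw [← div_le_iff₀' hpos]
    apply le_csInf (nucSet_nonempty M)
    intro s hs
    rw [div_le_iff₀' hpos]
    exact key s hs

lemma sum_sq_eq_norm_sq (y : EuclideanSpace ℝ m) : ∑ i, y i ^ 2 = ‖y‖ ^ 2 := by
  rw [EuclideanSpace.norm_eq, Real.sq_sqrt]
  · exact Finset.sum_congr rfl fun i _ => by simp [Real.norm_eq_abs, sq_abs]
  · exact Finset.sum_nonneg fun i _ => sq_nonneg _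

lemma exists_near (A : Matrix m n ℝ) [DecidableEq m] {ε : ℝ} (hε : 0 < ε) :
    ∃ M : Matrix m n ℝ, nuclearNorm M ≤ 1 ∧
      specNorm A - ε ≤ ∑ i, ∑ j, A i j * M i j := by
  classical
  set T := LinearMap.toContinuousLinearMap (Matrix.toEuclideanLin A) with hT
  by_cases hle : ‖T‖ ≤ ε
  · refine ⟨0, by simp [nuclearNorm_zero], ?_⟩
    have : specNorm A - ε ≤ 0 := by rw [specNorm]; linarith
    simpa using this
  push_neg at hle
  have hlt : ‖T‖ - ε < ‖T‖ := by linarith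
  obtain ⟨x, hx1, hx2⟩ := T.exists_lt_apply_of_lt_opNorm hlt
  set y : EuclideanSpace ℝ m := T x with hy
  have hypos : 0 < ‖y‖ := lt_of_le_of_lt (by linarith) hx2
  set a : m → ℝ := fun i => y i / ‖y‖ with ha
  set b : n → ℝ := fun j => x j with hb
  have hmv : ∀ i, (A *ᵥ b) i = y i := by
    intro i
    have := Matrix.ofLp_toEuclideanLin_apply A x
    have h2 := congrFun this i
    simpa [hy, hT, hb] using h2.symm
  have hna : Real.sqrt (∑ i, a i ^ 2) = 1 := by
    have : ∑ i, a i ^ 2 = (∑ i, y i ^ 2) / ‖y‖ ^ 2 := by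
      rw [Finset.sum_div]
      exact Finset.sum_congr rfl fun i _ => by rw [ha]; ring
    rw [this, sum_sq_eq_norm_sq, div_self (by positivity), Real.sqrt_one]
  have hnb : Real.sqrt (∑ j, b j ^ 2) = ‖x‖ := by
    rw [show ∑ j, b j ^ 2 = ‖x‖ ^ 2 from sum_sq_eq_norm_sq x, Real.sqrt_sq (norm_nonneg _)]
  refine ⟨Matrix.of fun i j => a i * b j, ?_, ?_⟩
  · calc nuclearNorm (Matrix.of fun i j => a i * b j)
        ≤ Real.sqrt (∑ i, a i ^ 2) * Real.sqrt (∑ j, b j ^ 2) := nuclearNorm_rank_one_le a b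
      _ = ‖x‖ := by rw [hna, hnb, one_mul]
      _ ≤ 1 := le_of_lt hx1
  · have heq : ∑ i, ∑ j, A i j * (Matrix.of fun i j => a i * b j) i j
        = ∑ i, a i * (A *ᵥ b) i := by
      apply Finset.sum_congr rfl
      intro i _
      simp only [Matrix.of_apply, Matrix.mulVec, dotProduct, Finset.mul_sum]
      exact Finset.sum_congr rfl fun j _ => by ring
    rw [heq]
    have : ∑ i, a i * (A *ᵥ b) i = ‖y‖ := by
      have : ∑ i, a i * (A *ᵥ b) i = (∑ i, y i ^ 2) / ‖y‖ := by
        rw [Finset.sum_div]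
        apply Finset.sum_congr rfl
        intro i _
        rw [ha, hmv i]
        ring
      rw [this, sum_sq_eq_norm_sq, sq, mul_div_assoc, div_self (ne_of_gt hypos), mul_one]
    rw [this, specNorm, ← hT]
    linarith

def modeEquiv {K n : ℕ} (k : Fin K) :
    (Fin K → Fin n) ≃ (Fin n) × ({l : Fin K // l ≠ k} → Fin n) where
  toFun idx := (idx k, fun l => idx l.1)
  invFun p := fun l => if h : l = k then p.1 else p.2 ⟨l, h⟩
  left_inv idx := by
    funext l
    by_cases h : l = k <;> simp [h]
  right_inv p := by
    refine Prod.ext (by simp) ?_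
    funext l
    simp [l.2]

lemma step_A {K n : ℕ} (k : Fin K) (Y : (Fin K → Fin n) → ℝ)
    (N : Matrix (Fin n) ({l : Fin K // l ≠ k} → Fin n) ℝ) :
    ∑ idx, Y idx * fold k N idx = ∑ i, ∑ f, unfold k Y i f * N i f := by
  have h := Equiv.sum_comp (modeEquiv (n := n) k).symm
    (fun idx => Y idx * fold k N idx)
  rw [← h, Fintype.sum_prod_type]
  apply Finset.sum_congr rfl; intro i _
  apply Finset.sum_congr rfl; intro f _
  have h1 : Y ((modeEquiv (n := n) k).symm (i, f)) = unfold k Y i f := rfl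
  have h2 : fold k N ((modeEquiv (n := n) k).symm (i, f)) = N i f := by
    show N (if h : k = k then i else f ⟨k, h⟩)
        (fun l => if h : (l : Fin K) = k then i else f ⟨(l : Fin K), h⟩) = N i f
    rw [dif_pos rfl]
    congr 1
    funext l
    rw [dif_neg l.2]
  rw [h1, h2]

lemma step_B {m p q : Type*} [Fintype m] [Fintype p] [Fintype q]
    (U : Matrix m p ℝ) (S : Matrix p q ℝ) (N : Matrix m q ℝ) :
    ∑ i, ∑ f, U i f * (N * Sᵀ) i f = ∑ i, ∑ g, (U * S) i g * N i g := by
  apply Finset.sum_congr rfl; intro i _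
  simp only [Matrix.mul_apply, Matrix.transpose_apply, Finset.mul_sum, Finset.sum_mul]
  rw [Finset.sum_comm]
  apply Finset.sum_congr rfl; intro g _
  apply Finset.sum_congr rfl; intro f _
  ring

end Aux

/-- the dual norm of the subspace norm associated with S⁽¹⁾,…,S⁽ᴷ⁾ is
‖Y‖ₛ* = maxₖ ‖Y₍ₖ₎S⁽ᵏ⁾‖: the supremum of ⟨Y, Σₖ foldₖ(M⁽ᵏ⁾(S⁽ᵏ⁾)ᵀ)⟩ over
Σₖ‖M⁽ᵏ⁾‖* ≤ 1 equals maxₖ of the spectral norm of Y₍ₖ₎S⁽ᵏ⁾. -/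
theorem stmt5 {K n H : ℕ} (hK : 0 < K) (hH : H ≤ n)
    (S : ∀ k : Fin K, Matrix ({l : Fin K // l ≠ k} → Fin n) ({l : Fin K // l ≠ k} → Fin H) ℝ)
    (Y : (Fin K → Fin n) → ℝ) :
    sSup { v : ℝ | ∃ M : ∀ k : Fin K,
            Matrix (Fin n) ({l : Fin K // l ≠ k} → Fin H) ℝ,
          (∑ k, nuclearNorm (M k)) ≤ 1 ∧
          v = ∑ idx, Y idx * (∑ k, fold k (M k * (S k)ᵀ) idx) } =
      Finset.univ.sup' (Finset.univ_nonempty_iff.mpr ⟨⟨0, hK⟩⟩)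
        (fun k => specNorm (unfold k Y * S k)) := by
  classical
  set f : Fin K → ℝ := fun k => specNorm (unfold k Y * S k) with hfdef
  set t : ℝ := Finset.univ.sup' (Finset.univ_nonempty_iff.mpr ⟨⟨0, hK⟩⟩) f with htdef
  have hne : (Finset.univ : Finset (Fin K)).Nonempty := Finset.univ_nonempty_iff.mpr ⟨⟨0, hK⟩⟩
  have hkey : ∀ (k : Fin K) (M : Matrix (Fin n) ({l : Fin K // l ≠ k} → Fin H) ℝ),
      ∑ idx, Y idx * fold k (M * (S k)ᵀ) idx
        = ∑ i, ∑ g, (unfold k Y * S k) i g * M i g :=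
    fun k M => (step_A k Y (M * (S k)ᵀ)).trans (step_B (unfold k Y) (S k) M)
  have hv : ∀ (M : ∀ k : Fin K, Matrix (Fin n) ({l : Fin K // l ≠ k} → Fin H) ℝ),
      ∑ idx, Y idx * (∑ k, fold k (M k * (S k)ᵀ) idx)
        = ∑ k, ∑ i, ∑ g, (unfold k Y * S k) i g * (M k) i g := by
    intro M
    simp only [Finset.mul_sum]
    rw [Finset.sum_comm]
    exact Finset.sum_congr rfl fun k _ => hkey k (M k)
  have hfle : ∀ k, f k ≤ t := fun k => Finset.le_sup' f (Finset.mem_univ k)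
  have ht0 : 0 ≤ t := le_trans (norm_nonneg _) (hfle ⟨0, hK⟩)
  have hub : ∀ v ∈ { v : ℝ | ∃ M : ∀ k : Fin K,
            Matrix (Fin n) ({l : Fin K // l ≠ k} → Fin H) ℝ,
          (∑ k, nuclearNorm (M k)) ≤ 1 ∧
          v = ∑ idx, Y idx * (∑ k, fold k (M k * (S k)ᵀ) idx) }, v ≤ t := by
    rintro v ⟨M, hM, rfl⟩
    rw [hv M]
    calc ∑ k, ∑ i, ∑ g, (unfold k Y * S k) i g * (M k) i g
        ≤ ∑ k, specNorm (unfold k Y * S k) * nuclearNorm (M k) :=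
          Finset.sum_le_sum fun k _ => ip_le_spec_mul_nuc _ (M k)
      _ ≤ ∑ k, t * nuclearNorm (M k) :=
          Finset.sum_le_sum fun k _ =>
            mul_le_mul_of_nonneg_right (hfle k) (nuclearNorm_nonneg _)
      _ = t * ∑ k, nuclearNorm (M k) := by rw [Finset.mul_sum]
      _ ≤ t * 1 := mul_le_mul_of_nonneg_left hM ht0
      _ = t := mul_one t
  have hmem0 : (∑ idx, Y idx * (∑ k, fold k ((fun _ => (0 : Matrix (Fin n)
        ({l : Fin K // l ≠ _} → Fin H) ℝ)) k * (S k)ᵀ) idx)) ∈ { v : ℝ | ∃ M : ∀ k : Fin K,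
            Matrix (Fin n) ({l : Fin K // l ≠ k} → Fin H) ℝ,
          (∑ k, nuclearNorm (M k)) ≤ 1 ∧
          v = ∑ idx, Y idx * (∑ k, fold k (M k * (S k)ᵀ) idx) } :=
    ⟨fun _ => 0, by simp [nuclearNorm_zero], rfl⟩
  have hsetne : { v : ℝ | ∃ M : ∀ k : Fin K,
            Matrix (Fin n) ({l : Fin K // l ≠ k} → Fin H) ℝ,
          (∑ k, nuclearNorm (M k)) ≤ 1 ∧
          v = ∑ idx, Y idx * (∑ k, fold k (M k * (S k)ᵀ) idx) }.Nonempty := ⟨_, hmem0⟩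
  have hbdd : BddAbove { v : ℝ | ∃ M : ∀ k : Fin K,
            Matrix (Fin n) ({l : Fin K // l ≠ k} → Fin H) ℝ,
          (∑ k, nuclearNorm (M k)) ≤ 1 ∧
          v = ∑ idx, Y idx * (∑ k, fold k (M k * (S k)ᵀ) idx) } := ⟨t, hub⟩
  refine le_antisymm (csSup_le hsetne hub) ?_
  obtain ⟨k₀, -, hk₀⟩ := Finset.exists_mem_eq_sup' hne f
  apply le_of_forall_pos_le_add
  intro ε hε
  obtain ⟨M₀, hM1, hM2⟩ := exists_near (unfold k₀ Y * S k₀) hε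
  set Mf : ∀ k : Fin K, Matrix (Fin n) ({l : Fin K // l ≠ k} → Fin H) ℝ :=
    Function.update (fun k => 0) k₀ M₀ with hMf
  have hMfk₀ : Mf k₀ = M₀ := Function.update_self _ _ _
  have hMfo : ∀ k, k ≠ k₀ → Mf k = 0 := fun k h => Function.update_of_ne h _ _
  have hnucsum : ∑ k, nuclearNorm (Mf k) ≤ 1 := by
    rw [Fintype.sum_eq_single k₀ (fun k h => by rw [hMfo k h, nuclearNorm_zero]), hMfk₀]
    exact hM1
  have hvval : ∑ idx, Y idx * (∑ k, fold k (Mf k * (S k)ᵀ) idx)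
      = ∑ i, ∑ g, (unfold k₀ Y * S k₀) i g * M₀ i g := by
    rw [hv Mf, Fintype.sum_eq_single k₀ (fun k h => by rw [hMfo k h]; simp), hMfk₀]
  have hvmem : (∑ idx, Y idx * (∑ k, fold k (Mf k * (S k)ᵀ) idx)) ∈
      { v : ℝ | ∃ M : ∀ k : Fin K,
            Matrix (Fin n) ({l : Fin K // l ≠ k} → Fin H) ℝ,
          (∑ k, nuclearNorm (M k)) ≤ 1 ∧
          v = ∑ idx, Y idx * (∑ k, fold k (M k * (S k)ᵀ) idx) } := ⟨Mf, hnucsum, rfl⟩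
  have hle := le_csSup hbdd hvmem
  rw [hvval] at hle
  have : t - ε ≤ ∑ i, ∑ g, (unfold k₀ Y * S k₀) i g * M₀ i g := by
    have ht : t = f k₀ := hk₀
    rw [ht]
    exact hM2
  linarith
end

section
/- Let M_p and M̂ be matrices and Δ = M̂ − M_p. Let P_U, P_V be the orthogonal projections onto the column and row spaces of M_p, and set Δ'' = (I − P_U)Δ(I − P_V), Δ' = Δ − Δ''. Then ‖M̂‖* ≥ ‖M_p‖* + ‖Δ''‖* − ‖Δ'‖*, where ‖·‖* is the nuclear norm. -/
open Matrix

namespace NNaux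

variable {n m : ℕ}

def decompSet (A : Matrix (Fin n) (Fin m) ℝ) : Set ℝ :=
  { s | ∃ (R : ℕ) (a : Fin R → Fin n → ℝ) (b : Fin R → Fin m → ℝ),
    A = ∑ r, Matrix.of (fun i j => a r i * b r j) ∧
    s = ∑ r, Real.sqrt (∑ i, a r i ^ 2) * Real.sqrt (∑ j, b r j ^ 2) }

lemma nn_eq (A : Matrix (Fin n) (Fin m) ℝ) : nuclearNorm A = sInf (decompSet A) := rfl

lemma decomp_nonneg {A : Matrix (Fin n) (Fin m) ℝ} {s : ℝ} (hs : s ∈ decompSet A) : 0 ≤ s := by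
  obtain ⟨R, a, b, -, rfl⟩ := hs
  exact Finset.sum_nonneg fun r _ => mul_nonneg (Real.sqrt_nonneg _) (Real.sqrt_nonneg _)

lemma decomp_bddBelow (A : Matrix (Fin n) (Fin m) ℝ) : BddBelow (decompSet A) :=
  ⟨0, fun _ hs => decomp_nonneg hs⟩

lemma decomp_nonempty (A : Matrix (Fin n) (Fin m) ℝ) : (decompSet A).Nonempty := by
  refine ⟨_, n, fun r i => if i = r then 1 else 0, fun r j => A r j, ?_, rfl⟩
  ext i j
  simp [Matrix.sum_apply, ite_mul]

lemma nn_le {A : Matrix (Fin n) (Fin m) ℝ} {s : ℝ} (hs : s ∈ decompSet A) :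
    nuclearNorm A ≤ s := csInf_le (decomp_bddBelow A) hs

lemma decomp_add {A B : Matrix (Fin n) (Fin m) ℝ} {s t : ℝ}
    (hs : s ∈ decompSet A) (ht : t ∈ decompSet B) : s + t ∈ decompSet (A + B) := by
  obtain ⟨R1, a1, b1, hA, rfl⟩ := hs
  obtain ⟨R2, a2, b2, hB, rfl⟩ := ht
  refine ⟨R1 + R2, Fin.append a1 a2, Fin.append b1 b2, ?_, ?_⟩
  · rw [Fin.sum_univ_add]
    simp only [Fin.append_left, Fin.append_right]
    rw [hA, hB]
  · rw [Fin.sum_univ_add]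
    simp only [Fin.append_left, Fin.append_right]

lemma nn_triangle (A B : Matrix (Fin n) (Fin m) ℝ) :
    nuclearNorm (A + B) ≤ nuclearNorm A + nuclearNorm B := by
  rw [nn_eq A, nn_eq B]
  have h1 : nuclearNorm (A + B) - sInf (decompSet B) ≤ sInf (decompSet A) := by
    refine le_csInf (decomp_nonempty A) fun s hs => ?_
    have h2 : nuclearNorm (A + B) - s ≤ sInf (decompSet B) := by
      refine le_csInf (decomp_nonempty B) fun t ht => ?_
      have := nn_le (decomp_add hs ht)
      linarith
    linarith
  linarith

lemma nn_neg (A : Matrix (Fin n) (Fin m) ℝ) : nuclearNorm (-A) = nuclearNorm A := by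
  rw [nn_eq, nn_eq]
  have key : ∀ (X : Matrix (Fin n) (Fin m) ℝ), decompSet X ⊆ decompSet (-X) := by
    rintro X s ⟨R, a, b, hX, rfl⟩
    refine ⟨R, fun r => -(a r), b, ?_, ?_⟩
    · rw [hX]; ext i j; simp [Matrix.sum_apply]
    · refine Finset.sum_congr rfl fun r _ => ?_
      congr 2
      refine Finset.sum_congr rfl fun i _ => ?_
      simp
  have h2 := key (-A)
  rw [neg_neg] at h2
  exact le_antisymm (csInf_le_csInf (decomp_bddBelow (-A)) (decomp_nonempty A) (key A))
    (csInf_le_csInf (decomp_bddBelow A) (decomp_nonempty (-A)) h2)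

lemma cs2 (a b c d : ℝ) (ha : 0 ≤ a) (hb : 0 ≤ b) (hc : 0 ≤ c) (hd : 0 ≤ d) :
    a * b + c * d ≤ Real.sqrt (a^2 + c^2) * Real.sqrt (b^2 + d^2) := by
  rw [← Real.sqrt_mul (by positivity)]
  rw [show a * b + c * d = Real.sqrt ((a*b+c*d)^2) by
    rw [Real.sqrt_sq (by positivity)]]
  apply Real.sqrt_le_sqrt
  nlinarith [sq_nonneg (a*d - c*b)]

lemma pyth {k : ℕ} (P : Matrix (Fin k) (Fin k) ℝ) (hproj : P * P = P) (hsym : Pᵀ = P)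
    (x : Fin k → ℝ) :
    (∑ i, (P *ᵥ x) i ^ 2) + ∑ i, (((1 : Matrix (Fin k) (Fin k) ℝ) - P) *ᵥ x) i ^ 2
      = ∑ i, x i ^ 2 := by
  have hQ : ∀ (Q : Matrix (Fin k) (Fin k) ℝ), Qᵀ * Q = Q →
      ∑ i, (Q *ᵥ x) i ^ 2 = x ⬝ᵥ (Q *ᵥ x) := by
    intro Q hQ
    have h1 : ∑ i, (Q *ᵥ x) i ^ 2 = (Q *ᵥ x) ⬝ᵥ (Q *ᵥ x) := by
      simp [dotProduct, sq]
    rw [h1, Matrix.dotProduct_mulVec, ← Matrix.mulVec_transpose, Matrix.mulVec_mulVec, hQ,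
      dotProduct_comm]
  have h1 := hQ P (by rw [hsym, hproj])
  have h2 := hQ ((1 : Matrix (Fin k) (Fin k) ℝ) - P) (by
    rw [Matrix.transpose_sub, Matrix.transpose_one, hsym]
    rw [Matrix.sub_mul, Matrix.mul_sub, Matrix.mul_sub, hproj]
    simp)
  rw [h1, h2, ← dotProduct_add, ← Matrix.add_mulVec]
  simp [dotProduct, sq]

lemma proj_rank_one (PU : Matrix (Fin n) (Fin n) ℝ) (PV : Matrix (Fin m) (Fin m) ℝ)
    (hPVsym : PVᵀ = PV) (a : Fin n → ℝ) (b : Fin m → ℝ) :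
    PU * Matrix.of (fun i j => a i * b j) * PV
      = Matrix.of (fun i j => (PU *ᵥ a) i * (PV *ᵥ b) j) := by
  have hs : ∀ x y, PV x y = PV y x := fun x y =>
    (congrFun (congrFun hPVsym x) y).symm.trans (Matrix.transpose_apply PV x y)
  ext i j
  simp only [Matrix.mul_apply, Matrix.of_apply, Matrix.mulVec, dotProduct]
  rw [Finset.sum_mul_sum]
  rw [Finset.sum_comm]
  refine Finset.sum_congr rfl fun l _ => ?_
  rw [Finset.sum_mul]
  refine Finset.sum_congr rfl fun k _ => ?_
  rw [hs j l]
  ring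

lemma superadd (PU : Matrix (Fin n) (Fin n) ℝ) (PV : Matrix (Fin m) (Fin m) ℝ)
    (hPUproj : PU * PU = PU) (hPUsym : PUᵀ = PU)
    (hPVproj : PV * PV = PV) (hPVsym : PVᵀ = PV)
    (A B : Matrix (Fin n) (Fin m) ℝ)
    (hA1 : PU * A = A) (hA2 : A * PV = A) (hB1 : PU * B = 0) (hB2 : B * PV = 0) :
    nuclearNorm A + nuclearNorm B ≤ nuclearNorm (A + B) := by
  have hQ1sym : ((1 : Matrix (Fin n) (Fin n) ℝ) - PU)ᵀ = 1 - PU := by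
    rw [Matrix.transpose_sub, Matrix.transpose_one, hPUsym]
  have hA : A = PU * (A + B) * PV := by
    rw [Matrix.mul_add, hA1, hB1, add_zero, hA2]
  have hB : B = ((1 : Matrix (Fin n) (Fin n) ℝ) - PU) * (A + B)
      * ((1 : Matrix (Fin m) (Fin m) ℝ) - PV) := by
    have e1 : ((1 : Matrix (Fin n) (Fin n) ℝ) - PU) * (A + B) = B := by
      rw [Matrix.sub_mul, Matrix.one_mul, Matrix.mul_add, hA1, hB1, add_zero, add_sub_cancel_left]
    rw [e1, Matrix.mul_sub, Matrix.mul_one, hB2, sub_zero]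
  rw [nn_eq (A + B)]
  refine le_csInf (decomp_nonempty _) ?_
  rintro s ⟨R, a, b, hdec, rfl⟩
  have hAd : A = ∑ r, Matrix.of (fun i j => (PU *ᵥ a r) i * (PV *ᵥ b r) j) := by
    rw [hA, hdec, Matrix.mul_sum, Matrix.sum_mul]
    exact Finset.sum_congr rfl fun r _ => proj_rank_one PU PV hPVsym (a r) (b r)
  have hBd : B = ∑ r, Matrix.of (fun i j =>
      (((1 : Matrix (Fin n) (Fin n) ℝ) - PU) *ᵥ a r) i
        * (((1 : Matrix (Fin m) (Fin m) ℝ) - PV) *ᵥ b r) j) := by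
    rw [hB, hdec, Matrix.mul_sum, Matrix.sum_mul]
    exact Finset.sum_congr rfl fun r _ => proj_rank_one _ _ (by
      rw [Matrix.transpose_sub, Matrix.transpose_one, hPVsym]) (a r) (b r)
  have h1 := nn_le ⟨R, _, _, hAd, rfl⟩
  have h2 := nn_le ⟨R, _, _, hBd, rfl⟩
  refine le_trans (add_le_add h1 h2) ?_
  rw [← Finset.sum_add_distrib]
  refine Finset.sum_le_sum fun r _ => ?_
  have hp1 := pyth PU hPUproj hPUsym (a r)
  have hp2 := pyth PV hPVproj hPVsym (b r)
  have key := cs2 (Real.sqrt (∑ i, (PU *ᵥ a r) i ^ 2)) (Real.sqrt (∑ j, (PV *ᵥ b r) j ^ 2))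
    (Real.sqrt (∑ i, (((1 : Matrix (Fin n) (Fin n) ℝ) - PU) *ᵥ a r) i ^ 2))
    (Real.sqrt (∑ j, (((1 : Matrix (Fin m) (Fin m) ℝ) - PV) *ᵥ b r) j ^ 2))
    (Real.sqrt_nonneg _) (Real.sqrt_nonneg _) (Real.sqrt_nonneg _) (Real.sqrt_nonneg _)
  rw [Real.sq_sqrt (Finset.sum_nonneg fun i _ => sq_nonneg _),
    Real.sq_sqrt (Finset.sum_nonneg fun i _ => sq_nonneg _),
    Real.sq_sqrt (Finset.sum_nonneg fun i _ => sq_nonneg _),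
    Real.sq_sqrt (Finset.sum_nonneg fun i _ => sq_nonneg _), hp1, hp2] at key
  exact key

lemma proj_fix {k l : ℕ} (P : Matrix (Fin k) (Fin k) ℝ) (M : Matrix (Fin k) (Fin l) ℝ)
    (hproj : P * P = P)
    (hrange : LinearMap.range P.mulVecLin = LinearMap.range M.mulVecLin) :
    P * M = M := by
  have hfix : ∀ x, P *ᵥ (M *ᵥ x) = M *ᵥ x := by
    intro x
    have hx : M *ᵥ x ∈ LinearMap.range P.mulVecLin := by
      rw [hrange]; exact ⟨x, rfl⟩
    obtain ⟨y, hy⟩ := hx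
    have hy' : P *ᵥ y = M *ᵥ x := hy
    rw [← hy', Matrix.mulVec_mulVec, hproj]
  ext i j
  have := congrFun (hfix (Pi.single j 1)) i
  rw [Matrix.mulVec_mulVec] at this
  simpa [Matrix.mulVec_single] using this

end NNaux

open NNaux

/-- with Δ = M̂ − M_p, Δ'' = (I−P_U)Δ(I−P_V), Δ' = Δ − Δ'' where
P_U, P_V are the orthogonal projections onto the column and row spaces of M_p,
one has ‖M̂‖* ≥ ‖M_p‖* + ‖Δ''‖* − ‖Δ'‖*. -/
theorem stmt8 {n m : ℕ}
    (Mp Mhat : Matrix (Fin n) (Fin m) ℝ)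
    (PU : Matrix (Fin n) (Fin n) ℝ) (PV : Matrix (Fin m) (Fin m) ℝ)
    (hPUproj : PU * PU = PU) (hPUsym : PUᵀ = PU)
    (hPUrange : LinearMap.range PU.mulVecLin = LinearMap.range Mp.mulVecLin)
    (hPVproj : PV * PV = PV) (hPVsym : PVᵀ = PV)
    (hPVrange : LinearMap.range PV.mulVecLin = LinearMap.range Mpᵀ.mulVecLin)
    (Δ Δ' Δ'' : Matrix (Fin n) (Fin m) ℝ)
    (hΔ : Δ = Mhat - Mp)
    (hΔ'' : Δ'' = (1 - PU) * Δ * (1 - PV))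
    (hΔ' : Δ' = Δ - Δ'') :
    nuclearNorm Mhat ≥ nuclearNorm Mp + nuclearNorm Δ'' - nuclearNorm Δ' := by
  have hPUMp : PU * Mp = Mp := proj_fix PU Mp hPUproj hPUrange
  have hMpPV : Mp * PV = Mp := by
    have hT : PV * Mpᵀ = Mpᵀ := proj_fix PV Mpᵀ hPVproj hPVrange
    have := congrArg Matrix.transpose hT
    rwa [Matrix.transpose_mul, Matrix.transpose_transpose, hPVsym] at this
  have hPUD : PU * Δ'' = 0 := by
    have h0 : PU * (1 - PU) = 0 := by
      rw [Matrix.mul_sub, Matrix.mul_one, hPUproj, sub_self]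
    rw [hΔ'', ← Matrix.mul_assoc, ← Matrix.mul_assoc, h0, Matrix.zero_mul, Matrix.zero_mul]
  have hDPV : Δ'' * PV = 0 := by
    have h0 : ((1 : Matrix (Fin m) (Fin m) ℝ) - PV) * PV = 0 := by
      rw [Matrix.sub_mul, Matrix.one_mul, hPVproj, sub_self]
    rw [hΔ'', Matrix.mul_assoc, h0, Matrix.mul_zero]
  have hsup := superadd PU PV hPUproj hPUsym hPVproj hPVsym Mp Δ'' hPUMp hMpPV hPUD hDPV
  have hMhat : Mp + Δ'' = Mhat + -Δ' := by
    rw [hΔ', hΔ]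
    abel
  have htri : nuclearNorm (Mp + Δ'') ≤ nuclearNorm Mhat + nuclearNorm Δ' := by
    rw [hMhat]
    exact (nn_triangle _ _).trans (by rw [nn_neg])
  linarith
end
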